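/- arXiv:2302.09796 — 3 statements merged into one kernel-verified Lean document; each statement's English description precedes it below -/
import Mathlib

section
/- Given S ∈ I, an element y ∈ S, and a set X ⊆ U \ S, there exists x ∈ X with (S \ {y}) ∪ {x} ∈ I if and only if rank((S \ {y}) ∪ X) ≥ |S|. -/
open Finset

/-- A matroid on a finite ground set `E`, given by its independence predicate. -/
structure FinMatroid (α : Type*) [DecidableEq α] where
  E : Finset α
  Indep : Finset α → Prop
  indep_subset_ground : ∀ ⦃S : Finset α⦄, Indep S → S ⊆ E
  indep_empty : Indep ∅
  indep_mono : ∀ ⦃S T : Finset α⦄, Indep S → T ⊆ S → Indep T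
  indep_exchange : ∀ ⦃S T : Finset α⦄, Indep S → Indep T → S.card < T.card →
    ∃ x ∈ T, x ∉ S ∧ Indep (insert x S)

variable {α : Type*} [DecidableEq α]

/-- The rank of a set `X`: the maximum cardinality of an independent subset of `X`. -/
noncomputable def FinMatroid.rank (M : FinMatroid α) (X : Finset α) : ℕ :=
  sSup {n : ℕ | ∃ S : Finset α, M.Indep S ∧ S ⊆ X ∧ S.card = n}

lemma rank_bddAbove (M : FinMatroid α) (X : Finset α) :
    BddAbove {n : ℕ | ∃ S : Finset α, M.Indep S ∧ S ⊆ X ∧ S.card = n} := by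
  refine ⟨X.card, fun n hn => ?_⟩
  obtain ⟨T, _, hTX, rfl⟩ := hn
  exact Finset.card_le_card hTX

lemma le_rank_of_indep (M : FinMatroid α) {T X : Finset α} (hT : M.Indep T) (hTX : T ⊆ X) :
    T.card ≤ M.rank X :=
  le_csSup (rank_bddAbove M X) ⟨T, hT, hTX, rfl⟩

lemma exists_indep_card_rank (M : FinMatroid α) (X : Finset α) :
    ∃ T : Finset α, M.Indep T ∧ T ⊆ X ∧ T.card = M.rank X := by
  have hne : {n : ℕ | ∃ S : Finset α, M.Indep S ∧ S ⊆ X ∧ S.card = n}.Nonempty :=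
    ⟨0, ∅, M.indep_empty, Finset.empty_subset _, Finset.card_empty⟩
  have := Nat.sSup_mem hne (rank_bddAbove M X)
  exact this

/-- Co-circuit exchange: for `y ∈ S` and `X ⊆ U \ S`, there is `x ∈ X` with
`(S \ {y}) ∪ {x}` independent iff `rank ((S \ {y}) ∪ X) ≥ |S|`. -/
theorem cocircuit_exchange (M : FinMatroid α) (S : Finset α) (hS : M.Indep S)
    (y : α) (hy : y ∈ S) (X : Finset α) (hX : X ⊆ M.E \ S) :
    (∃ x ∈ X, M.Indep (insert x (S.erase y))) ↔ S.card ≤ M.rank (S.erase y ∪ X) := by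
  constructor
  · rintro ⟨x, hxX, hind⟩
    have hxS : x ∉ S := (Finset.mem_sdiff.mp (hX hxX)).2
    have hx : x ∉ S.erase y := fun h => hxS (Finset.mem_of_mem_erase h)
    have hsub : insert x (S.erase y) ⊆ S.erase y ∪ X := by
      intro a ha
      rcases Finset.mem_insert.mp ha with rfl | ha
      · exact Finset.mem_union_right _ hxX
      · exact Finset.mem_union_left _ ha
    have hcard : (insert x (S.erase y)).card = S.card := by
      rw [Finset.card_insert_of_notMem hx, Finset.card_erase_of_mem hy]
      exact Nat.succ_pred_eq_of_pos (Finset.card_pos.mpr ⟨y, hy⟩)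
    calc S.card = (insert x (S.erase y)).card := hcard.symm
      _ ≤ _ := le_rank_of_indep M hind hsub
  · intro hr
    obtain ⟨T, hTind, hTsub, hTcard⟩ := exists_indep_card_rank M (S.erase y ∪ X)
    have hlt : (S.erase y).card < T.card := by
      rw [hTcard, Finset.card_erase_of_mem hy]
      have : 0 < S.card := Finset.card_pos.mpr ⟨y, hy⟩
      omega
    obtain ⟨x, hxT, hx, hind⟩ :=
      M.indep_exchange (M.indep_mono hS (Finset.erase_subset _ _)) hTind hlt
    refine ⟨x, ?_, hind⟩
    rcases Finset.mem_union.mp (hTsub hxT) with h | h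
    · exact absurd h hx
    · exact h
end

section
/- Let X and Y be subsets of the ground set of a matroid with injective weights such that every element of X has strictly smaller weight than every element of Y. If S_X is the min-weight basis of X and S_Y is the min-weight basis of Y, then the min-weight basis of S_X ∪ S_Y equals the min-weight basis of X ∪ Y. -/
open Finset

variable {α : Type*} [DecidableEq α]

/-- `S` is a basis of `X`: an independent subset of `X` of size `rank X`. -/
def FinMatroid.IsBasisOf (M : FinMatroid α) (S X : Finset α) : Prop :=
  M.Indep S ∧ S ⊆ X ∧ S.card = M.rank X

/-- `B` is the min-weight basis of `Z` with respect to the weights `w`. -/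
def IsMinWeightBasis (M : FinMatroid α) (w : α → ℝ) (Z B : Finset α) : Prop :=
  M.IsBasisOf B Z ∧ ∀ B' : Finset α, M.IsBasisOf B' Z → ∑ x ∈ B, w x ≤ ∑ x ∈ B', w x

namespace FinMatroid

variable (M : FinMatroid α)

lemma rank_bdd (X : Finset α) :
    BddAbove {n : ℕ | ∃ S : Finset α, M.Indep S ∧ S ⊆ X ∧ S.card = n} := by
  refine ⟨X.card, ?_⟩
  rintro n ⟨S, _, hSX, rfl⟩
  exact Finset.card_le_card hSX

lemma rank_spec (X : Finset α) :
    ∃ S : Finset α, M.Indep S ∧ S ⊆ X ∧ S.card = M.rank X := by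
  have h : M.rank X ∈ {n : ℕ | ∃ S : Finset α, M.Indep S ∧ S ⊆ X ∧ S.card = n} := by
    apply Nat.sSup_mem
    · exact ⟨0, ∅, M.indep_empty, Finset.empty_subset _, rfl⟩
    · exact M.rank_bdd X
  exact h

lemma exists_basis (X : Finset α) : ∃ S, M.IsBasisOf S X := by
  obtain ⟨S, h1, h2, h3⟩ := M.rank_spec X
  exact ⟨S, h1, h2, h3⟩

lemma card_le_rank {S X : Finset α} (hS : M.Indep S) (hSX : S ⊆ X) :
    S.card ≤ M.rank X :=
  le_csSup (M.rank_bdd X) ⟨S, hS, hSX, rfl⟩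

lemma rank_mono {X Y : Finset α} (h : X ⊆ Y) : M.rank X ≤ M.rank Y := by
  obtain ⟨S, h1, h2, h3⟩ := M.rank_spec X
  rw [← h3]
  exact M.card_le_rank h1 (h2.trans h)

/-- Any independent subset of `X` extends to a basis of `X`. -/
lemma exists_basis_superset {J X : Finset α} (hJ : M.Indep J) (hJX : J ⊆ X) :
    ∃ B, M.IsBasisOf B X ∧ J ⊆ B := by
  suffices h : ∀ n (J : Finset α), M.Indep J → J ⊆ X → M.rank X - J.card = n →
      ∃ B, M.IsBasisOf B X ∧ J ⊆ B from h _ J hJ hJX rfl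
  intro n
  induction n with
  | zero =>
    intro J hJ hJX hn
    have h1 : M.rank X ≤ J.card := Nat.le_of_sub_eq_zero hn
    exact ⟨J, ⟨hJ, hJX, le_antisymm (M.card_le_rank hJ hJX) h1⟩, subset_rfl⟩
  | succ n ih =>
    intro J hJ hJX hn
    have hlt : J.card < M.rank X := by omega
    obtain ⟨S, hS1, hS2, hS3⟩ := M.rank_spec X
    obtain ⟨x, hxS, hxJ, hx⟩ := M.indep_exchange hJ hS1 (by omega)
    have hsub : insert x J ⊆ X := Finset.insert_subset (hS2 hxS) hJX
    have hcard : (insert x J).card = J.card + 1 := Finset.card_insert_of_notMem hxJ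
    obtain ⟨B, hB, hJB⟩ := ih (insert x J) hx hsub (by omega)
    exact ⟨B, hB, (Finset.subset_insert x J).trans hJB⟩

/-- Augment `I` from `J` keeping everything inside `I ∪ J`. -/
lemma augment_to_card : ∀ (n : ℕ) (I J : Finset α), M.Indep I → M.Indep J →
    J.card - I.card = n → I.card ≤ J.card →
    ∃ K, M.Indep K ∧ I ⊆ K ∧ K ⊆ I ∪ J ∧ K.card = J.card := by
  intro n
  induction n with
  | zero =>
    intro I J hI hJ hn hle
    exact ⟨I, hI, subset_rfl, Finset.subset_union_left, by omega⟩
  | succ n ih =>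
    intro I J hI hJ hn hle
    obtain ⟨y, hyJ, hyI, hy⟩ := M.indep_exchange hI hJ (by omega)
    have hcard : (insert y I).card = I.card + 1 := Finset.card_insert_of_notMem hyI
    obtain ⟨K, hK1, hK2, hK3, hK4⟩ := ih (insert y I) J hy hJ (by omega) (by omega)
    refine ⟨K, hK1, (Finset.subset_insert y I).trans hK2, ?_, hK4⟩
    intro a ha
    rcases Finset.mem_union.1 (hK3 ha) with h | h
    · rcases Finset.mem_insert.1 h with rfl | h
      · exact Finset.mem_union_right _ hyJ
      · exact Finset.mem_union_left _ h
    · exact Finset.mem_union_right _ h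

lemma rank_insert_le (X : Finset α) (e : α) :
    M.rank (insert e X) ≤ M.rank X + 1 := by
  obtain ⟨S, h1, h2, h3⟩ := M.rank_spec (insert e X)
  rw [← h3]
  have : S.erase e ⊆ X := by
    intro a ha
    have := h2 (Finset.mem_of_mem_erase ha)
    rcases Finset.mem_insert.1 this with rfl | h
    · exact absurd rfl (Finset.ne_of_mem_erase ha)
    · exact h
  have hc : (S.erase e).card ≤ M.rank X :=
    M.card_le_rank (M.indep_mono h1 (Finset.erase_subset _ _)) this
  have := Finset.card_erase_add_one (s := S) (a := e)
  by_cases he : e ∈ S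
  · have := Finset.card_erase_add_one he
    omega
  · rw [Finset.erase_eq_of_notMem he] at hc
    omega

/-- If `e` is in the span of `B` and `B ⊆ A`, then `e` is in the span of `A`. -/
lemma rank_insert_eq_of_subset {Bs A : Finset α} (e : α) (hBA : Bs ⊆ A)
    (h : M.rank (insert e Bs) = M.rank Bs) : M.rank (insert e A) = M.rank A := by
  by_cases heA : e ∈ A
  · rw [Finset.insert_eq_of_mem heA]
  have heB : e ∉ Bs := fun h' => heA (hBA h')
  obtain ⟨J, hJbasis⟩ := M.exists_basis Bs
  obtain ⟨I, hIbasis, hJI⟩ := M.exists_basis_superset hJbasis.1 (hJbasis.2.1.trans hBA)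
  have heI : e ∉ I := fun h' => heA (hIbasis.2.1 h')
  have heJ : e ∉ J := fun h' => heB (hJbasis.2.1 h')
  have hdep : ¬ M.Indep (insert e I) := by
    intro hind
    have h1 : M.Indep (insert e J) :=
      M.indep_mono hind (Finset.insert_subset_insert _ hJI)
    have h2 : insert e J ⊆ insert e Bs := Finset.insert_subset_insert _ hJbasis.2.1
    have h3 : (insert e J).card ≤ M.rank (insert e Bs) := M.card_le_rank h1 h2
    rw [Finset.card_insert_of_notMem heJ, hJbasis.2.2, h] at h3
    omega
  have hle : M.rank (insert e A) ≤ I.card := by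
    by_contra hcon
    push_neg at hcon
    obtain ⟨K, hK1, hK2, hK3⟩ := M.rank_spec (insert e A)
    obtain ⟨x, hxK, hxI, hx⟩ := M.indep_exchange hIbasis.1 hK1 (by omega)
    rcases Finset.mem_insert.1 (hK2 hxK) with rfl | hxA
    · exact hdep hx
    · have : (insert x I).card ≤ M.rank A :=
        M.card_le_rank hx (Finset.insert_subset hxA hIbasis.2.1)
      rw [Finset.card_insert_of_notMem hxI, hIbasis.2.2] at this
      omega
  have := M.rank_mono (Finset.subset_insert e A)
  have hIc := hIbasis.2.2
  omega

end FinMatroid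

section MinWeight

variable (M : FinMatroid α) (w : α → ℝ)

/-- Threshold characterization: a min-weight basis restricted to a weight-downward-closed
predicate has the full rank of the corresponding restriction of `Z`. -/
lemma minweight_filter {Z B : Finset α} (hB : IsMinWeightBasis M w Z B)
    (p : α → Prop) [DecidablePred p] (hp : ∀ a b, w a ≤ w b → p b → p a) :
    (B.filter p).card = M.rank (Z.filter p) := by
  obtain ⟨⟨hBind, hBZ, hBcard⟩, hBmin⟩ := hB
  have hfsub : B.filter p ⊆ Z.filter p := Finset.filter_subset_filter p hBZ
  have hle : (B.filter p).card ≤ M.rank (Z.filter p) :=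
    M.card_le_rank (M.indep_mono hBind (Finset.filter_subset _ _)) hfsub
  rcases eq_or_lt_of_le hle with heq | hlt
  · exact heq
  exfalso
  obtain ⟨C, hC1, hC2, hC3⟩ := M.rank_spec (Z.filter p)
  have hfind : M.Indep (B.filter p) := M.indep_mono hBind (Finset.filter_subset _ _)
  obtain ⟨x, hxC, hxf, hx⟩ := M.indep_exchange hfind hC1 (by omega)
  have hxZp : x ∈ Z.filter p := hC2 hxC
  have hpx : p x := (Finset.mem_filter.1 hxZp).2
  have hxZ : x ∈ Z := (Finset.mem_filter.1 hxZp).1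
  have hxB : x ∉ B := fun h => hxf (Finset.mem_filter.2 ⟨h, hpx⟩)
  -- augment insert x (B.filter p) from B
  have hrankZ : M.rank (Z.filter p) ≤ M.rank Z := M.rank_mono (Finset.filter_subset _ _)
  have hcard1 : (insert x (B.filter p)).card = (B.filter p).card + 1 :=
    Finset.card_insert_of_notMem hxf
  have hle2 : (insert x (B.filter p)).card ≤ B.card := by omega
  obtain ⟨K, hK1, hK2, hK3, hK4⟩ := M.augment_to_card (B.card - (insert x (B.filter p)).card)
    (insert x (B.filter p)) B hx hBind rfl hle2
  have hKsub : K ⊆ insert x B := by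
    intro a ha
    rcases Finset.mem_union.1 (hK3 ha) with h | h
    · rcases Finset.mem_insert.1 h with rfl | h
      · exact Finset.mem_insert_self _ _
      · exact Finset.mem_insert_of_mem (Finset.filter_subset _ _ h)
    · exact Finset.mem_insert_of_mem h
  have hxK : x ∈ K := hK2 (Finset.mem_insert_self _ _)
  have hKerase : K.erase x ⊆ B := by
    intro a ha
    rcases Finset.mem_insert.1 (hKsub (Finset.mem_of_mem_erase ha)) with rfl | h
    · exact absurd rfl (Finset.ne_of_mem_erase ha)
    · exact h
  have hKecard : (K.erase x).card = B.card - 1 := by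
    rw [Finset.card_erase_of_mem hxK, hK4]
  have hBpos : 1 ≤ B.card := by
    have := Finset.card_le_card (hK2.trans hKsub : insert x (B.filter p) ⊆ insert x B)
    have hx1 : 1 ≤ (insert x (B.filter p)).card := by omega
    omega
  -- B \ K.erase x is a singleton {y}
  have hdiffcard : (B \ K.erase x).card = 1 := by
    rw [Finset.card_sdiff_of_subset hKerase]
    omega
  obtain ⟨y, hy⟩ := Finset.card_eq_one.1 hdiffcard
  have hyB : y ∈ B := by
    have : y ∈ B \ K.erase x := hy ▸ Finset.mem_singleton_self y
    exact (Finset.mem_sdiff.1 this).1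
  have hyKe : y ∉ K.erase x := by
    have : y ∈ B \ K.erase x := hy ▸ Finset.mem_singleton_self y
    exact (Finset.mem_sdiff.1 this).2
  have hKe_eq : K.erase x = B.erase y := by
    apply Finset.eq_of_subset_of_card_le
    · intro a ha
      refine Finset.mem_erase.2 ⟨?_, hKerase ha⟩
      rintro rfl
      exact hyKe ha
    · rw [Finset.card_erase_of_mem hyB]
      omega
  have hyK : y ∉ K := by
    intro h
    have hyx : y ≠ x := by
      rintro rfl
      have : y ∈ B.filter p → False := fun hf => hxB hyB
      -- y = x but x ∉ B while y ∈ B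
      exact hxB hyB
    exact hyKe (Finset.mem_erase.2 ⟨hyx, h⟩)
  have hyNotp : ¬ p y := by
    intro hpy
    have : y ∈ insert x (B.filter p) :=
      Finset.mem_insert_of_mem (Finset.mem_filter.2 ⟨hyB, hpy⟩)
    exact hyK (hK2 this)
  have hwxy : w x < w y := by
    by_contra hcon
    push_neg at hcon
    exact hyNotp (hp y x hcon hpx)
  -- K is a basis of Z with smaller weight
  have hKbasis : M.IsBasisOf K Z := by
    refine ⟨hK1, ?_, by rw [hK4, hBcard]⟩
    intro a ha
    rcases Finset.mem_insert.1 (hKsub ha) with rfl | h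
    · exact hxZ
    · exact hBZ h
  have hsumK : ∑ a ∈ K, w a = w x + ∑ a ∈ B.erase y, w a := by
    rw [← hKe_eq, ← Finset.add_sum_erase K w hxK]
  have hsumB : ∑ a ∈ B, w a = w y + ∑ a ∈ B.erase y, w a :=
    (Finset.add_sum_erase B w hyB).symm
  have := hBmin K hKbasis
  rw [hsumK, hsumB] at this
  linarith

/-- Membership in a min-weight basis implies a rank jump over lighter elements. -/
lemma rank_jump_of_mem (hw : Function.Injective w) {Z B : Finset α}
    (hB : IsMinWeightBasis M w Z B) {e : α} (he : e ∈ B) :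
    M.rank (insert e (Z.filter (fun a => w a < w e))) =
      M.rank (Z.filter (fun a => w a < w e)) + 1 := by
  have hlt := minweight_filter M w hB (fun a => w a < w e)
    (fun a b hab hb => lt_of_le_of_lt hab hb)
  have hle := minweight_filter M w hB (fun a => w a ≤ w e)
    (fun a b hab hb => le_trans hab hb)
  have heZ : e ∈ Z := hB.1.2.1 he
  have hfeq : B.filter (fun a => w a ≤ w e) = insert e (B.filter (fun a => w a < w e)) := by
    ext a
    simp only [Finset.mem_filter, Finset.mem_insert]
    constructor
    · rintro ⟨haB, hale⟩
      rcases lt_or_eq_of_le hale with h | h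
      · exact Or.inr ⟨haB, h⟩
      · exact Or.inl (hw h)
    · rintro (rfl | ⟨haB, halt⟩)
      · exact ⟨he, le_refl _⟩
      · exact ⟨haB, le_of_lt halt⟩
  have henf : e ∉ B.filter (fun a => w a < w e) := by
    simp [Finset.mem_filter]
  have hcard : (B.filter (fun a => w a ≤ w e)).card =
      (B.filter (fun a => w a < w e)).card + 1 := by
    rw [hfeq, Finset.card_insert_of_notMem henf]
  -- B.filter (≤ w e) ⊆ insert e (Z.filter (< w e))
  have hsub : B.filter (fun a => w a ≤ w e) ⊆ insert e (Z.filter (fun a => w a < w e)) := by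
    intro a ha
    obtain ⟨haB, hale⟩ := Finset.mem_filter.1 ha
    rcases lt_or_eq_of_le hale with h | h
    · exact Finset.mem_insert_of_mem (Finset.mem_filter.2 ⟨hB.1.2.1 haB, h⟩)
    · exact Finset.mem_insert.2 (Or.inl (hw h))
  have h1 : M.rank (Z.filter (fun a => w a < w e)) + 1 ≤
      M.rank (insert e (Z.filter (fun a => w a < w e))) := by
    have := M.card_le_rank (M.indep_mono hB.1.1 (Finset.filter_subset _ _)) hsub
    omega
  have h2 : insert e (Z.filter (fun a => w a < w e)) ⊆ Z.filter (fun a => w a ≤ w e) := by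
    intro a ha
    rcases Finset.mem_insert.1 ha with rfl | h
    · exact Finset.mem_filter.2 ⟨heZ, le_refl _⟩
    · obtain ⟨h1', h2'⟩ := Finset.mem_filter.1 h
      exact Finset.mem_filter.2 ⟨h1', le_of_lt h2'⟩
  have h3 := M.rank_mono h2
  omega

/-- A rank jump over lighter elements implies membership in the min-weight basis. -/
lemma mem_of_rank_jump (hw : Function.Injective w) {Z B : Finset α}
    (hB : IsMinWeightBasis M w Z B) {e : α} (heZ : e ∈ Z)
    (hr : M.rank (Z.filter (fun a => w a < w e)) + 1 ≤
      M.rank (insert e (Z.filter (fun a => w a < w e)))) : e ∈ B := by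
  have hlt := minweight_filter M w hB (fun a => w a < w e)
    (fun a b hab hb => lt_of_le_of_lt hab hb)
  have hle := minweight_filter M w hB (fun a => w a ≤ w e)
    (fun a b hab hb => le_trans hab hb)
  have h2 : insert e (Z.filter (fun a => w a < w e)) ⊆ Z.filter (fun a => w a ≤ w e) := by
    intro a ha
    rcases Finset.mem_insert.1 ha with rfl | h
    · exact Finset.mem_filter.2 ⟨heZ, le_refl _⟩
    · obtain ⟨h1', h2'⟩ := Finset.mem_filter.1 h
      exact Finset.mem_filter.2 ⟨h1', le_of_lt h2'⟩
  have h3 := M.rank_mono h2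
  by_contra heB
  have hfeq : B.filter (fun a => w a ≤ w e) = B.filter (fun a => w a < w e) := by
    apply Finset.filter_congr
    intro a haB
    simp only [iff_iff_implies_and_implies]
    constructor
    · intro hale
      rcases lt_or_eq_of_le hale with h | h
      · exact h
      · exact absurd (hw h) (fun h' => heB (h' ▸ haB))
    · exact le_of_lt
  rw [hfeq, hlt] at hle
  omega

lemma minweight_unique_aux (hw : Function.Injective w) {Z B1 B2 : Finset α}
    (h1 : IsMinWeightBasis M w Z B1) (h2 : IsMinWeightBasis M w Z B2)
    {e : α} (he1 : e ∈ B1) (he2 : e ∉ B2)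
    (hmin : ∀ d, ((d ∈ B1 ∧ d ∉ B2) ∨ (d ∈ B2 ∧ d ∉ B1)) → w e ≤ w d) : False := by
  have hA1 := minweight_filter M w h1 (fun a => w a ≤ w e)
    (fun a b hab hb => le_trans hab hb)
  have hA2 := minweight_filter M w h2 (fun a => w a ≤ w e)
    (fun a b hab hb => le_trans hab hb)
  have hfeq : B1.filter (fun a => w a ≤ w e) =
      insert e (B2.filter (fun a => w a ≤ w e)) := by
    ext a
    simp only [Finset.mem_filter, Finset.mem_insert]
    constructor
    · rintro ⟨haB1, hale⟩
      by_cases hae : a = e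
      · exact Or.inl hae
      right
      refine ⟨?_, hale⟩
      by_contra haB2
      have := hmin a (Or.inl ⟨haB1, haB2⟩)
      exact hae (hw (le_antisymm hale this))
    · rintro (rfl | ⟨haB2, hale⟩)
      · exact ⟨he1, le_refl _⟩
      refine ⟨?_, hale⟩
      by_contra haB1
      have := hmin a (Or.inr ⟨haB2, haB1⟩)
      have hae : a = e := hw (le_antisymm hale this)
      exact he2 (hae ▸ haB2)
  have henf : e ∉ B2.filter (fun a => w a ≤ w e) := by
    simp [Finset.mem_filter, he2]
  have : (B1.filter (fun a => w a ≤ w e)).card =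
      (B2.filter (fun a => w a ≤ w e)).card + 1 := by
    rw [hfeq, Finset.card_insert_of_notMem henf]
  omega

/-- Uniqueness of the min-weight basis for injective weights. -/
lemma minweight_unique (hw : Function.Injective w) {Z B1 B2 : Finset α}
    (h1 : IsMinWeightBasis M w Z B1) (h2 : IsMinWeightBasis M w Z B2) : B1 = B2 := by
  classical
  by_contra hne
  set D := (B1 \ B2) ∪ (B2 \ B1) with hD
  have hDne : D.Nonempty := by
    rw [Finset.nonempty_iff_ne_empty]
    intro hcon
    apply hne
    have h12 : B1 \ B2 = ∅ := by
      apply Finset.eq_empty_of_forall_notMem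
      intro a ha
      have : a ∈ D := Finset.mem_union_left _ ha
      rw [hcon] at this
      exact absurd this (Finset.notMem_empty a)
    have h21 : B2 \ B1 = ∅ := by
      apply Finset.eq_empty_of_forall_notMem
      intro a ha
      have : a ∈ D := Finset.mem_union_right _ ha
      rw [hcon] at this
      exact absurd this (Finset.notMem_empty a)
    apply Finset.Subset.antisymm
    · intro a ha
      by_contra h
      exact absurd (Finset.mem_sdiff.2 ⟨ha, h⟩) (h12 ▸ Finset.notMem_empty a)
    · intro a ha
      by_contra h
      exact absurd (Finset.mem_sdiff.2 ⟨ha, h⟩) (h21 ▸ Finset.notMem_empty a)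
  obtain ⟨e, heD, hemin⟩ := Finset.exists_min_image D w hDne
  have hmin : ∀ d, ((d ∈ B1 ∧ d ∉ B2) ∨ (d ∈ B2 ∧ d ∉ B1)) → w e ≤ w d := by
    intro d hd
    apply hemin
    rcases hd with ⟨h1', h2'⟩ | ⟨h1', h2'⟩
    · exact Finset.mem_union_left _ (Finset.mem_sdiff.2 ⟨h1', h2'⟩)
    · exact Finset.mem_union_right _ (Finset.mem_sdiff.2 ⟨h1', h2'⟩)
  rcases Finset.mem_union.1 heD with h | h
  · obtain ⟨he1, he2⟩ := Finset.mem_sdiff.1 h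
    exact minweight_unique_aux M w hw h1 h2 he1 he2 hmin
  · obtain ⟨he1, he2⟩ := Finset.mem_sdiff.1 h
    exact minweight_unique_aux M w hw h2 h1 he1 he2
      (fun d hd => hmin d (hd.symm))

/-- Existence of a min-weight basis. -/
lemma exists_minweight_basis (Z : Finset α) : ∃ B, IsMinWeightBasis M w Z B := by
  classical
  set 𝒞 : Finset (Finset α) := Z.powerset.filter (fun S => M.IsBasisOf S Z) with h𝒞
  have hne : 𝒞.Nonempty := by
    obtain ⟨S, hS⟩ := M.exists_basis Z
    exact ⟨S, Finset.mem_filter.2 ⟨Finset.mem_powerset.2 hS.2.1, hS⟩⟩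
  obtain ⟨B, hB𝒞, hBmin⟩ := Finset.exists_min_image 𝒞 (fun S => ∑ x ∈ S, w x) hne
  refine ⟨B, (Finset.mem_filter.1 hB𝒞).2, ?_⟩
  intro B' hB'
  exact hBmin B' (Finset.mem_filter.2 ⟨Finset.mem_powerset.2 hB'.2.1, hB'⟩)

end MinWeight

/-- Sparsification: if all weights in `X` are smaller than those in `Y`, then
the min-weight basis of `SX ∪ SY` (where `SX`, `SY` are the min-weight bases of
`X`, `Y`) is also the min-weight basis of `X ∪ Y`. -/
theorem minweight_basis_sparsification (M : FinMatroid α) (w : α → ℝ)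
    (hw : Function.Injective w)
    (X Y SX SY B : Finset α) (hX : X ⊆ M.E) (hY : Y ⊆ M.E)
    (hXY : ∀ x ∈ X, ∀ y ∈ Y, w x < w y)
    (hSX : IsMinWeightBasis M w X SX) (hSY : IsMinWeightBasis M w Y SY)
    (hB : IsMinWeightBasis M w (SX ∪ SY) B) :
    IsMinWeightBasis M w (X ∪ Y) B := by
  classical
  obtain ⟨Bs, hBs⟩ := exists_minweight_basis M w (X ∪ Y)
  -- key claim: Bs ⊆ SX ∪ SY
  have key : ∀ (W SW : Finset α), W ⊆ X ∪ Y → IsMinWeightBasis M w W SW →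
      ∀ e ∈ Bs, e ∈ W → e ∈ SW := by
    intro W SW hWsub hSW e heBs heW
    have hjump := rank_jump_of_mem M w hw hBs heBs
    apply mem_of_rank_jump M w hw hSW heW
    -- need rank (W.filter (< w e)) + 1 ≤ rank (insert e (W.filter (< w e)))
    have hsub : W.filter (fun a => w a < w e) ⊆ (X ∪ Y).filter (fun a => w a < w e) :=
      Finset.filter_subset_filter _ hWsub
    have hmono := M.rank_mono (Finset.subset_insert e (W.filter (fun a => w a < w e)))
    rcases eq_or_lt_of_le hmono with heq | hlt
    · exfalso
      have := M.rank_insert_eq_of_subset e hsub heq.symm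
      omega
    · omega
  have hsubXY : ∀ W SW, IsMinWeightBasis M w W SW → W ⊆ X ∪ Y → True := fun _ _ _ _ => trivial
  have hBsSub : Bs ⊆ SX ∪ SY := by
    intro e he
    rcases Finset.mem_union.1 (hBs.1.2.1 he) with h | h
    · exact Finset.mem_union_left _ (key X SX Finset.subset_union_left hSX e he h)
    · exact Finset.mem_union_right _ (key Y SY Finset.subset_union_right hSY e he h)
  have hSsub : SX ∪ SY ⊆ X ∪ Y :=
    Finset.union_subset_union hSX.1.2.1 hSY.1.2.1
  have hrank_eq : M.rank (SX ∪ SY) = M.rank (X ∪ Y) := by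
    have h1 := M.rank_mono hSsub
    have h2 : M.rank (X ∪ Y) ≤ M.rank (SX ∪ SY) := by
      have := M.card_le_rank hBs.1.1 hBsSub
      rw [hBs.1.2.2] at this
      exact this
    omega
  have hBs_basis : M.IsBasisOf Bs (SX ∪ SY) :=
    ⟨hBs.1.1, hBsSub, by rw [hBs.1.2.2, hrank_eq]⟩
  have hBs_min : IsMinWeightBasis M w (SX ∪ SY) Bs := by
    refine ⟨hBs_basis, ?_⟩
    intro C hC
    exact hBs.2 C ⟨hC.1, hC.2.1.trans hSsub, by rw [hC.2.2, hrank_eq]⟩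
  have : B = Bs := minweight_unique M w hw hB hBs_min
  rw [this]
  exact hBs
end

section
/- Let S be a common independent set of two matroids M₁, M₂ on ground set U. If P is a shortest (s,t)-path in the exchange graph G(S), then S' := S ⊕ (V(P) \ {s,t}) is a common independent set of size |S| + 1. Conversely, if t is unreachable from s in G(S), then S is a maximum-cardinality common independent set. -/
open Finset

variable {α : Type*} [DecidableEq α]

/-- Exchange-graph edges between ground-set elements, for a common independent set `S`. -/
def ExchangeEdge (M1 M2 : FinMatroid α) (S : Finset α) (u v : α) : Prop :=
  (u ∈ S ∧ v ∉ S ∧ M1.Indep (insert v (S.erase u))) ∨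
  (u ∉ S ∧ v ∈ S ∧ M2.Indep (insert u (S.erase v)))

/-- An augmenting path in the exchange graph `G(S)`, recorded by its list of
interior vertices (the endpoints `s`, `t` are implicit). -/
def IsAugPath (M1 M2 : FinMatroid α) (S : Finset α) (p : List α) : Prop :=
  ∃ h : p ≠ [],
    p.Nodup ∧ (∀ a ∈ p, a ∈ M1.E) ∧
    p.head h ∉ S ∧ M1.Indep (insert (p.head h) S) ∧
    p.getLast h ∉ S ∧ M2.Indep (insert (p.getLast h) S) ∧
    p.Chain' (ExchangeEdge M1 M2 S)


set_option linter.unusedSectionVars false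
set_option linter.unnecessarySimpa false

/- ### basic matroid lemmas -/

lemma exists_max_between (M : FinMatroid α) (A C : Finset α) (hA : M.Indep A) (hAC : A ⊆ C) :
    ∃ B, A ⊆ B ∧ B ⊆ C ∧ M.Indep B ∧ ∀ z ∈ C, z ∉ B → ¬ M.Indep (insert z B) := by
  classical
  obtain ⟨B, hBmem, hBmax⟩ := Finset.exists_max_image
    ((C.powerset).filter (fun B => A ⊆ B ∧ M.Indep B)) Finset.card
    ⟨A, by simp [hAC, hA]⟩
  simp only [Finset.mem_filter, Finset.mem_powerset] at hBmem
  refine ⟨B, hBmem.2.1, hBmem.1, hBmem.2.2, ?_⟩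
  intro z hzC hzB hzind
  have : (insert z B).card ≤ B.card := by
    apply hBmax
    simp only [Finset.mem_filter, Finset.mem_powerset]
    exact ⟨Finset.insert_subset hzC hBmem.1, hBmem.2.1.trans (Finset.subset_insert _ _), hzind⟩
  rw [Finset.card_insert_of_notMem hzB] at this
  omega

lemma key1 (M : FinMatroid α) {S A : Finset α} {y : α} (hS : M.Indep S) (hAS : A ⊆ S)
    (hy : y ∉ S) (hyA : M.Indep (insert y A)) (hyS : ¬ M.Indep (insert y S)) :
    ∃ x ∈ S, x ∉ A ∧ M.Indep (insert y (S.erase x)) := by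
  obtain ⟨B, h1, h2, h3, h4⟩ := exists_max_between M (insert y A) (insert y S) hyA
    (Finset.insert_subset_insert _ hAS)
  have hcard : S.card ≤ B.card := by
    by_contra h
    obtain ⟨z, hz, hzB, hzind⟩ := M.indep_exchange h3 hS (by omega)
    exact h4 z (Finset.mem_insert_of_mem hz) hzB hzind
  have hne : B ≠ insert y S := fun h => hyS (h ▸ h3)
  obtain ⟨x, hx, hxB⟩ := Finset.exists_of_ssubset (lt_of_le_of_ne h2 hne)
  have hyB : y ∈ B := h1 (Finset.mem_insert_self _ _)
  have hxy : x ≠ y := fun h => hxB (h ▸ hyB)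
  have hxS : x ∈ S := (Finset.mem_insert.1 hx).resolve_left hxy
  have hBsub : B ⊆ insert y (S.erase x) := by
    intro b hb
    rcases Finset.mem_insert.1 (h2 hb) with h | h
    · exact h ▸ Finset.mem_insert_self _ _
    · exact Finset.mem_insert_of_mem (Finset.mem_erase.2 ⟨fun he => hxB (he ▸ hb), h⟩)
  have hcards : (insert y (S.erase x)).card ≤ B.card := by
    rw [Finset.card_insert_of_notMem (fun h => hy (Finset.mem_of_mem_erase h)),
      Finset.card_erase_of_mem hxS]
    have : 1 ≤ S.card := Finset.card_pos.2 ⟨x, hxS⟩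
    omega
  have hBeq : B = insert y (S.erase x) := Finset.eq_of_subset_of_card_le hBsub hcards
  exact ⟨x, hxS, fun h => hxB (h1 (Finset.mem_insert_of_mem h)), hBeq ▸ h3⟩

lemma span_bound (M : FinMatroid α) {A T : Finset α} (X : Finset α) (hA : M.Indep A) (hT : M.Indep T)
    (hTX : T ⊆ X) (hsp : ∀ y ∈ X, y ∉ A → ¬ M.Indep (insert y A)) : T.card ≤ A.card := by
  by_contra h
  obtain ⟨y, hyT, hyA, hyI⟩ := M.indep_exchange hA hT (lt_of_not_ge h)
  exact hsp y (hTX hyT) hyA hyI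

/- ### Reachability for part 2 -/

def Reach (M1 M2 : FinMatroid α) (S : Finset α) (v : α) : Prop :=
  ∃ p : List α, ∃ h : p ≠ [], p.Nodup ∧ (∀ a ∈ p, a ∈ M1.E) ∧
    p.head h ∉ S ∧ M1.Indep (insert (p.head h) S) ∧
    p.Chain' (ExchangeEdge M1 M2 S) ∧ p.getLast h = v

lemma reach_base {M1 M2 : FinMatroid α} {S : Finset α} {y : α} (hy : y ∉ S)
    (hyI : M1.Indep (insert y S)) : Reach M1 M2 S y := by
  refine ⟨[y], by simp, by simp, ?_, hy, hyI, List.isChain_singleton _, rfl⟩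
  intro a ha
  simp only [List.mem_singleton] at ha
  subst ha
  exact M1.indep_subset_ground hyI (Finset.mem_insert_self _ _)

lemma chain'_suffix {R : α → α → Prop} {l₁ l₂ : List α} (h : List.Chain' R (l₁ ++ l₂)) :
    List.Chain' R l₂ := (List.isChain_append.1 h).2.1

lemma reach_of_mem {M1 M2 : FinMatroid α} {S : Finset α} {p : List α} {h : p ≠ []}
    (hnd : p.Nodup) (hE : ∀ a ∈ p, a ∈ M1.E) (hh : p.head h ∉ S)
    (hhI : M1.Indep (insert (p.head h) S)) (hch : p.Chain' (ExchangeEdge M1 M2 S))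
    {v : α} (hv : v ∈ p) : Reach M1 M2 S v := by
  obtain ⟨s, t, rfl⟩ := List.append_of_mem hv
  have hne : s ++ [v] ≠ [] := by simp
  refine ⟨s ++ [v], hne, ?_, ?_, ?_, ?_, ?_, ?_⟩
  · have : List.Sublist (s ++ [v]) (s ++ v :: t) := by
      apply List.Sublist.append_left
      simpa using List.sublist_cons_of_sublist v (List.nil_sublist t)
    exact this.nodup hnd
  · intro a ha
    apply hE
    rcases List.mem_append.1 ha with h | h
    · exact List.mem_append_left _ h
    · simp only [List.mem_singleton] at h; subst h; exact List.mem_append_right _ (by simp)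
  · rwa [show (s ++ [v]).head hne = (s ++ v :: t).head h from ?_]
    cases s with
    | nil => rfl
    | cons a s' => simp
  · rwa [show (s ++ [v]).head hne = (s ++ v :: t).head h from ?_]
    cases s with
    | nil => rfl
    | cons a s' => simp
  · have : s ++ v :: t = (s ++ [v]) ++ t := by simp
    rw [this] at hch
    exact (List.isChain_append.1 hch).1
  · simp

lemma reach_extend {M1 M2 : FinMatroid α} {S : Finset α} (hS1 : M1.Indep S) {v w : α}
    (hr : Reach M1 M2 S v) (he : ExchangeEdge M1 M2 S v w) : Reach M1 M2 S w := by
  obtain ⟨p, h, hnd, hE, hh, hhI, hch, hlast⟩ := hr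
  by_cases hw : w ∈ p
  · exact reach_of_mem hnd hE hh hhI hch hw
  · have hwE : w ∈ M1.E := by
      rcases he with ⟨_, _, hI⟩ | ⟨_, hwS, _⟩
      · exact M1.indep_subset_ground hI (Finset.mem_insert_self _ _)
      · exact M1.indep_subset_ground hS1 hwS
    have hne : p ++ [w] ≠ [] := by simp [h]
    refine ⟨p ++ [w], hne, ?_, ?_, ?_, ?_, ?_, ?_⟩
    · simp [List.nodup_append, hnd, hw]
      exact fun a ha h => hw (h ▸ ha)
    · intro a ha
      rcases List.mem_append.1 ha with h' | h'
      · exact hE a h'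
      · simp only [List.mem_singleton] at h'; subst h'; exact hwE
    · rwa [List.head_append_of_ne_nil h]
    · rwa [List.head_append_of_ne_nil h]
    · show List.IsChain _ _
      rw [List.isChain_append]
      refine ⟨hch, List.isChain_singleton _, ?_⟩
      intro x hx y hy
      rw [List.getLast?_eq_getLast h] at hx
      simp only [Option.mem_some_iff, List.head?_cons] at hx hy
      subst hx; subst hy
      rwa [hlast]
    · rw [List.getLast_append]
      simp

lemma part2 (M1 M2 : FinMatroid α) (S : Finset α) (hS1 : M1.Indep S) (hS2 : M2.Indep S)
    (hno : ¬ ∃ p : List α, IsAugPath M1 M2 S p) :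
    ∀ T : Finset α, M1.Indep T → M2.Indep T → T.card ≤ S.card := by
  classical
  intro T hT1 hT2
  have hreach2 : ∀ v, Reach M1 M2 S v → v ∉ S → ¬ M2.Indep (insert v S) := by
    rintro v ⟨p, h, hnd, hE, hh, hhI, hch, hlast⟩ hvS hvI
    exact hno ⟨p, h, hnd, hE, hh, hhI, hlast ▸ hvS, hlast ▸ hvI, hch⟩
  set R := fun v => Reach M1 M2 S v with hR
  set S1 := S.filter R with hS1def
  set S2 := S.filter (fun v => ¬ R v) with hS2def
  have hS1sub : S1 ⊆ S := Finset.filter_subset _ _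
  have hS2sub : S2 ⊆ S := Finset.filter_subset _ _
  -- T ∩ reachable bounded by S1 via M2
  have h1 : (T.filter R).card ≤ S1.card := by
    apply span_bound M2 (T.filter R) (M2.indep_mono hS2 hS1sub)
      (M2.indep_mono hT2 (Finset.filter_subset _ _)) (Finset.Subset.refl _)
    intro y hy hyS1
    obtain ⟨hyT, hyR⟩ := Finset.mem_filter.1 hy
    by_cases hyS : y ∈ S
    · exact absurd (Finset.mem_filter.2 ⟨hyS, hyR⟩) hyS1
    intro hcon
    obtain ⟨x, hxS, hxS1, hxI⟩ := key1 M2 hS2 hS1sub hyS hcon (hreach2 y hyR hyS)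
    have : Reach M1 M2 S x := reach_extend hS1 hyR (Or.inr ⟨hyS, hxS, hxI⟩)
    exact hxS1 (Finset.mem_filter.2 ⟨hxS, this⟩)
  -- T ∩ unreachable bounded by S2 via M1
  have h2 : (T.filter (fun v => ¬ R v)).card ≤ S2.card := by
    apply span_bound M1 (T.filter (fun v => ¬ R v)) (M1.indep_mono hS1 hS2sub)
      (M1.indep_mono hT1 (Finset.filter_subset _ _)) (Finset.Subset.refl _)
    intro y hy hyS2
    obtain ⟨hyT, hyR⟩ := Finset.mem_filter.1 hy
    by_cases hyS : y ∈ S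
    · exact absurd (Finset.mem_filter.2 ⟨hyS, hyR⟩) hyS2
    intro hcon
    have hybase : ¬ M1.Indep (insert y S) := fun hI => hyR (reach_base hyS hI)
    obtain ⟨x, hxS, hxS2, hxI⟩ := key1 M1 hS1 hS2sub hyS hcon hybase
    have hxR : R x := by
      by_contra hxR
      exact hxS2 (Finset.mem_filter.2 ⟨hxS, hxR⟩)
    exact hyR (reach_extend hS1 hxR (Or.inl ⟨hxS, hyS, hxI⟩))
  have hT : (T.filter R).card + (T.filter (fun v => ¬ R v)).card = T.card :=
    Finset.card_filter_add_card_filter_not _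
  have hSc : S1.card + S2.card = S.card :=
    Finset.card_filter_add_card_filter_not _
  omega

/- ### Part 1: the triangular exchange core lemma -/

/-- elements at even positions -/
def evens : List α → List α
  | [] => []
  | [a] => [a]
  | a :: _ :: l => a :: evens l

@[simp] lemma evens_nil : evens ([] : List α) = [] := rfl
@[simp] lemma evens_single (a : α) : evens [a] = [a] := rfl
@[simp] lemma evens_cons_cons (a b : α) (l : List α) : evens (a :: b :: l) = a :: evens l := rfl

lemma evens_sublist : ∀ l : List α, List.Sublist (evens l) l
  | [] => by simp
  | [a] => by simp
  | a :: b :: l => by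
      simpa using List.Sublist.trans (List.Sublist.cons₂ a (evens_sublist l))
        (List.Sublist.cons₂ a (List.sublist_cons_of_sublist b (List.Sublist.refl l)))

lemma mem_evens_drop2 {z : α} : ∀ {l : List α}, z ∈ evens (l.drop 2) → z ∈ evens l
  | [] => by simp
  | [a] => by simp
  | a :: b :: l => by
      intro h
      simp only [List.drop_succ_cons, List.drop_zero] at h
      exact List.mem_cons_of_mem _ h

lemma evens_head_mem {l : List α} (h : l ≠ []) : l.head h ∈ evens l := by
  match l with
  | [a] => simp
  | a :: b :: l => simp

/-- The chain of positive and negative exchange conditions along an alternating path,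
all relative to the base set `S`. -/
def CC (M : FinMatroid α) (S : Finset α) : List α → Prop
  | [] => True
  | [y] => y ∉ S
  | y :: x :: rest => y ∉ S ∧ x ∈ S ∧
      (∃ h : rest ≠ [], M.Indep (insert (rest.head h) (S.erase x))) ∧
      (∀ z ∈ evens (rest.drop 2), ¬ M.Indep (insert z (S.erase x))) ∧
      CC M S rest

lemma CC_notmem {M : FinMatroid α} {S : Finset α} :
    ∀ {r : List α}, CC M S r → ∀ z ∈ evens r, z ∉ S
  | [], _, z, hz => by simp at hz
  | [y], h, z, hz => by simp at hz; subst hz; exact h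
  | y :: x :: rest, h, z, hz => by
      simp only [evens_cons_cons, List.mem_cons] at hz
      rcases hz with rfl | hz
      · exact h.1
      · exact CC_notmem h.2.2.2.2 z hz

set_option linter.unusedSectionVars false

lemma transfer (M : FinMatroid α) {S : Finset α} (hS : M.Indep S) {x₁ y₁ : α}
    (hx₁ : x₁ ∈ S) (hy₁ : y₁ ∉ S) (hy₁S : M.Indep (insert y₁ S)) :
    ∀ r : List α, CC M S r → (∀ z ∈ r, z ≠ x₁ ∧ z ≠ y₁) →
      (∀ z ∈ evens (r.drop 2), ¬ M.Indep (insert z (S.erase x₁))) →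
      CC M (insert y₁ (S.erase x₁)) r
  | [] => fun _ _ _ => trivial
  | [y] => by
      intro hC hd _
      have hyS : y ∉ S := hC
      intro hmem
      rcases Finset.mem_insert.1 hmem with h | h
      · exact (hd y (by simp)).2 h
      · exact hyS (Finset.mem_of_mem_erase h)
  | y :: x :: r₂ => by
      intro hC hd hneg1
      obtain ⟨hy, hx, ⟨hr₂ne, hedge⟩, hnegx, hCr₂⟩ := hC
      have hxx₁ : x ≠ x₁ := (hd x (by simp)).1
      have hxy₁ : x ≠ y₁ := (hd x (by simp)).2
      have hS2 : 1 < S.card := Finset.one_lt_card.2 ⟨x, hx, x₁, hx₁, hxx₁⟩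
      have hxe : x ∈ S.erase x₁ := Finset.mem_erase.2 ⟨hxx₁, hx⟩
      have hx₁e : x₁ ∈ S.erase x := Finset.mem_erase.2 ⟨fun h => hxx₁ h.symm, hx₁⟩
      set A := (S.erase x₁).erase x with hA
      have hAsub : A ⊆ S.erase x := by
        rw [hA, Finset.erase_right_comm]
        exact Finset.erase_subset _ _
      have hAS : A ⊆ S := hAsub.trans (Finset.erase_subset _ _)
      have hAcard : A.card = S.card - 2 := by
        rw [hA, Finset.card_erase_of_mem hxe, Finset.card_erase_of_mem hx₁]
        omega
      have hTerase : (insert y₁ (S.erase x₁)).erase x = insert y₁ A := by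
        rw [hA, Finset.erase_insert_of_ne hxy₁.symm]
      have hTI : M.Indep (insert y₁ (S.erase x₁)) :=
        M.indep_mono hy₁S (Finset.insert_subset_insert _ (Finset.erase_subset _ _))
      have hTcard : (insert y₁ (S.erase x₁)).card = S.card := by
        rw [Finset.card_insert_of_notMem (fun h => hy₁ (Finset.mem_of_mem_erase h)),
          Finset.card_erase_of_mem hx₁]
        omega
      have hinsx₁A : insert x₁ ((S.erase x).erase x₁) = S.erase x := Finset.insert_erase hx₁e
      have hinsxA : insert x A = S.erase x₁ := Finset.insert_erase hxe
      refine ⟨?_, ?_, ?_, ?_, ?_⟩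
      · intro hmem
        rcases Finset.mem_insert.1 hmem with h | h
        · exact (hd y (by simp)).2 h
        · exact hy (Finset.mem_of_mem_erase h)
      · exact Finset.mem_insert_of_mem hxe
      · refine ⟨hr₂ne, ?_⟩
        set y' := r₂.head hr₂ne with hy'
        have hy'r₂ : y' ∈ r₂ := List.head_mem hr₂ne
        have hy'ev : y' ∈ evens r₂ := evens_head_mem hr₂ne
        have hy'S : y' ∉ S := CC_notmem hCr₂ y' hy'ev
        have hy'y₁ : y' ≠ y₁ := (hd y' (by simp [hy'r₂])).2
        by_contra hcon
        have hBI : M.Indep (insert y' A) :=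
          M.indep_mono hedge (Finset.insert_subset_insert _ hAsub)
        have hBcard : (insert y' A).card = S.card - 1 := by
          rw [Finset.card_insert_of_notMem (fun h => hy'S (hAS h))]
          omega
        obtain ⟨z, hzT, hzB, hzI⟩ := M.indep_exchange hBI hTI (by omega)
        have hz' : z = y₁ ∨ z = x := by
          rcases Finset.mem_insert.1 hzT with h | h
          · exact Or.inl h
          · right
            by_contra hzx
            exact hzB (Finset.mem_insert_of_mem (Finset.mem_erase.2 ⟨hzx, h⟩))
        rcases hz' with rfl | rfl
        · apply hcon
          rw [hTerase, Finset.insert_comm]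
          exact hzI
        · apply hneg1 y' (by simpa using hy'ev)
          rwa [Finset.insert_comm, hinsxA] at hzI
      · intro z hz hcon
        have hzev : z ∈ evens r₂ := mem_evens_drop2 hz
        have hzr : z ∈ r₂ := (evens_sublist r₂).mem hzev
        have hzS : z ∉ S := CC_notmem hCr₂ z hzev
        rw [hTerase] at hcon
        have hBI : M.Indep (insert z A) :=
          M.indep_mono hcon (by
            rw [Finset.insert_comm]
            exact Finset.subset_insert _ _)
        have hBcard : (insert z A).card = S.card - 1 := by
          rw [Finset.card_insert_of_notMem (fun h => hzS (hAS h))]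
          omega
        obtain ⟨w, hwS, hwB, hwI⟩ := M.indep_exchange hBI hS (by omega)
        have hw' : w = x₁ ∨ w = x := by
          by_contra hw
          push_neg at hw
          apply hwB
          apply Finset.mem_insert_of_mem
          rw [hA, Finset.erase_right_comm]
          exact Finset.mem_erase.2 ⟨hw.1, Finset.mem_erase.2 ⟨hw.2, hwS⟩⟩
        rcases hw' with rfl | rfl
        · apply hnegx z hz
          rw [hA, Finset.erase_right_comm] at hwI
          rwa [Finset.insert_comm, hinsx₁A] at hwI
        · apply hneg1 z (by simpa using hzev)
          rwa [Finset.insert_comm, hinsxA] at hwI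
      · exact transfer M hS hx₁ hy₁ hy₁S r₂ hCr₂
          (fun z hz => hd z (by simp [hz]))
          (fun z hz => hneg1 z (by simpa using mem_evens_drop2 hz))

lemma symmDiff_single {S : Finset α} {y : α} (hy : y ∉ S) :
    symmDiff S ([y] : List α).toFinset = insert y S := by
  ext a
  simp only [Finset.mem_symmDiff, List.toFinset_cons, List.toFinset_nil,
    insert_empty_eq, Finset.mem_singleton, Finset.mem_insert]
  by_cases h : a = y <;> simp_all

lemma symmDiff_cons_cons {S : Finset α} {y x : α} {l : List α} (hy : y ∉ S) (hx : x ∈ S)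
    (hyx : y ≠ x) (hyl : y ∉ l) (hxl : x ∉ l) :
    symmDiff S (y :: x :: l).toFinset = symmDiff (insert y (S.erase x)) l.toFinset := by
  ext a
  simp only [Finset.mem_symmDiff, List.toFinset_cons, Finset.mem_insert,
    List.mem_toFinset, Finset.mem_erase]
  by_cases h1 : a = y
  · subst h1; simp_all
  · by_cases h2 : a = x
    · subst h2; simp_all
    · simp_all

lemma core (M : FinMatroid α) :
    ∀ (q : List α) (hq : q ≠ []) (S : Finset α), M.Indep S → q.Nodup → CC M S q →
      M.Indep (insert (q.head hq) S) →
      (∀ z ∈ evens (q.drop 2), ¬ M.Indep (insert z S)) →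
      M.Indep (symmDiff S q.toFinset) ∧ (symmDiff S q.toFinset).card = S.card + 1
  | [], hq, _, _, _, _, _, _ => absurd rfl hq
  | [y], _, S, hS, _, hC, hhead, _ => by
      have hy : y ∉ S := hC
      rw [symmDiff_single hy]
      exact ⟨hhead, Finset.card_insert_of_notMem hy⟩
  | y :: x :: rest, _, S, hS, hnd, hC, hhead, hneg => by
      obtain ⟨hy, hx, ⟨hrne, hedge⟩, hnegx, hCrest⟩ := hC
      simp only [List.head_cons] at hhead
      have hynx : y ∉ x :: rest := by
        have := hnd
        rw [List.nodup_cons] at this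
        exact this.1
      have hyx : y ≠ x := fun h => hynx (h ▸ List.mem_cons_self)
      have hyrest : y ∉ rest := fun h => hynx (List.mem_cons_of_mem _ h)
      have hxrest : x ∉ rest := by
        have := hnd
        rw [List.nodup_cons, List.nodup_cons] at this
        exact this.2.1
      set T := insert y (S.erase x) with hT
      have hTI : M.Indep T :=
        M.indep_mono hhead (Finset.insert_subset_insert _ (Finset.erase_subset _ _))
      have hTcard : T.card = S.card := by
        rw [hT, Finset.card_insert_of_notMem (fun h => hy (Finset.mem_of_mem_erase h)),
          Finset.card_erase_of_mem hx]
        have : 1 ≤ S.card := Finset.card_pos.2 ⟨x, hx⟩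
        omega
      set y₂ := rest.head hrne with hy₂
      have hy₂ev : y₂ ∈ evens rest := evens_head_mem hrne
      have hy₂S : y₂ ∉ S := CC_notmem hCrest y₂ hy₂ev
      -- head condition for T
      have hheadT : M.Indep (insert y₂ T) := by
        by_contra hcon
        have hBcard : (insert y₂ (S.erase x)).card = S.card := by
          rw [Finset.card_insert_of_notMem (fun h => hy₂S (Finset.mem_of_mem_erase h)),
            Finset.card_erase_of_mem hx]
          have : 1 ≤ S.card := Finset.card_pos.2 ⟨x, hx⟩
          omega
        have hCcard : (insert y S).card = S.card + 1 := Finset.card_insert_of_notMem hy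
        obtain ⟨z, hzC, hzB, hzI⟩ := M.indep_exchange hedge hhead (by omega)
        have hz' : z = y ∨ z = x := by
          rcases Finset.mem_insert.1 hzC with h | h
          · exact Or.inl h
          · right
            by_contra hzx
            exact hzB (Finset.mem_insert_of_mem (Finset.mem_erase.2 ⟨hzx, h⟩))
        rcases hz' with rfl | rfl
        · apply hcon
          rw [hT, Finset.insert_comm]
          exact hzI
        · apply hneg y₂ (by simpa using hy₂ev)
          rwa [Finset.insert_comm, Finset.insert_erase hx] at hzI
      -- negative condition for T
      have hnegT : ∀ z ∈ evens (rest.drop 2), ¬ M.Indep (insert z T) := by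
        intro z hz hcon
        apply hnegx z hz
        apply M.indep_mono hcon
        rw [hT, Finset.insert_comm]
        exact Finset.subset_insert _ _
      have hCT : CC M T rest := transfer M hS hx hy hhead rest hCrest
        (fun z hz => ⟨fun h => hxrest (h ▸ hz), fun h => hyrest (h ▸ hz)⟩) hnegx
      obtain ⟨hI, hc⟩ := core M rest hrne T hTI (by
          rw [List.nodup_cons, List.nodup_cons] at hnd
          exact hnd.2.2) hCT hheadT hnegT
      rw [symmDiff_cons_cons hy hx hyx hyrest hxrest]
      exact ⟨hI, by rw [hc, hTcard]⟩

lemma head_append_cons (pre l l' : List α) (y : α) (h1 : pre ++ y :: l ≠ []) (h2 : pre ++ y :: l' ≠ []) :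
    (pre ++ y :: l).head h1 = (pre ++ y :: l').head h2 := by
  cases pre <;> simp

lemma head_eq_head {l1 l2 : List α} (h1 : l1 ≠ []) (h2 : l2 ≠ []) (h : l1.head? = l2.head?) :
    l1.head h1 = l2.head h2 := by
  rw [List.head?_eq_head h1, List.head?_eq_head h2] at h
  exact Option.some_injective _ h

lemma getLast_eq_of_split {p pre r : List α} (hr : r ≠ []) (h : p = pre ++ r) (hne : p ≠ []) :
    p.getLast hne = r.getLast hr := by
  subst h
  rw [List.getLast_append]
  simp [hr]

lemma build_CC (M1 M2 : FinMatroid α) (S : Finset α) (p : List α)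
    (hp : IsAugPath M1 M2 S p) (hmin : ∀ q : List α, IsAugPath M1 M2 S q → p.length ≤ q.length) :
    ∀ (r pre : List α), p = pre ++ r → (hr : r ≠ []) → r.head hr ∉ S → CC M1 S r
  | [], _, _, hr, _ => absurd rfl hr
  | [v], pre, _, _, hhead => by exact hhead
  | y :: x :: r₂, pre, hsplit, _, hhead => by
      obtain ⟨hne, hnd, hE, hh, hhI, hl, hlI, hch⟩ := hp
      simp only [List.head_cons] at hhead
      have hchr : List.Chain' (ExchangeEdge M1 M2 S) (y :: x :: r₂) := by
        rw [hsplit] at hch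
        exact chain'_suffix hch
      have hedge1 : ExchangeEdge M1 M2 S y x := (List.isChain_cons_cons.1 hchr).1
      have hchr2 : List.Chain' (ExchangeEdge M1 M2 S) (x :: r₂) := (List.isChain_cons_cons.1 hchr).2
      have hxS : x ∈ S := by
        rcases hedge1 with ⟨hyS, _, _⟩ | ⟨_, hxS, _⟩
        · exact absurd hyS hhead
        · exact hxS
      have hr₂ne : r₂ ≠ [] := by
        rintro rfl
        apply hl
        rw [getLast_eq_of_split (r := [y, x]) (by simp) hsplit hne]
        simpa using hxS
      obtain ⟨y₂, r₃⟩ := (List.exists_cons_of_ne_nil hr₂ne : ∃ a l, r₂ = a :: l)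
      obtain ⟨r₃, rfl⟩ := r₃
      have hedge2 : ExchangeEdge M1 M2 S x y₂ := (List.isChain_cons_cons.1 hchr2).1
      obtain ⟨_, hy₂S, hy₂I⟩ : x ∈ S ∧ y₂ ∉ S ∧ M1.Indep (insert y₂ (S.erase x)) := by
        rcases hedge2 with h | ⟨hxS', _, _⟩
        · exact h
        · exact absurd hxS hxS'
      have hCr₂ : CC M1 S (y₂ :: r₃) :=
        build_CC M1 M2 S p ⟨hne, hnd, hE, hh, hhI, hl, hlI, hch⟩ hmin (y₂ :: r₃) (pre ++ [y, x])
          (by rw [hsplit]; simp) (by simp) (by simpa using hy₂S)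
      refine ⟨hhead, hxS, ⟨by simp, by simpa using hy₂I⟩, ?_, hCr₂⟩
      -- the negative (no-shortcut) conditions, using minimality of p
      intro z hz hcon
      match r₃, hz with
      | w :: r₄, hz => ?_
      simp only [List.drop_succ_cons, List.drop_zero] at hz
      have hzr₄ : z ∈ r₄ := (evens_sublist r₄).subset hz
      have hzS : z ∉ S := CC_notmem hCr₂ z (by simpa using List.mem_cons_of_mem y₂ hz)
      obtain ⟨m, post, hsplit₄⟩ := List.append_of_mem hzr₄
      have hpshape : p = (pre ++ [y, x]) ++ ((y₂ :: w :: m) ++ z :: post) := by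
        rw [hsplit, hsplit₄]
        simp
      set p' : List α := (pre ++ [y, x]) ++ z :: post with hp'
      have hne' : p' ≠ [] := by simp [hp']
      have hsub : List.Sublist p' p := by
        rw [hpshape, hp']
        exact (List.sublist_append_right (y₂ :: w :: m) (z :: post)).append_left _
      have hchsplit := List.isChain_append.1 (hpshape ▸ hch)
      have hch' : List.Chain' (ExchangeEdge M1 M2 S) p' := by
        show List.IsChain _ _
        rw [hp', List.isChain_append]
        refine ⟨hchsplit.1, chain'_suffix hchsplit.2.1, ?_⟩
        intro a ha b hb
        simp only [List.getLast?_append, List.getLast?_cons_cons, List.getLast?_singleton,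
          Option.or_some, Option.some_or, Option.mem_def, Option.some.injEq, List.head?_cons] at ha hb
        subst ha; subst hb
        exact Or.inl ⟨hxS, hzS, hcon⟩
      have hhead' : p'.head hne' = p.head hne := by
        apply head_eq_head
        rw [hp', hsplit]
        cases pre <;> simp
      have hlast' : p'.getLast hne' = p.getLast hne := by
        rw [getLast_eq_of_split (r := z :: post) (by simp) hp' hne',
          getLast_eq_of_split (pre := pre ++ [y, x] ++ (y₂ :: w :: m)) (r := z :: post) (by simp)
            (by rw [hpshape]; simp) hne]
      have haug' : IsAugPath M1 M2 S p' :=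
        ⟨hne', hsub.nodup hnd, fun a ha => hE a (hsub.subset ha),
          hhead' ▸ hh, hhead' ▸ hhI, hlast' ▸ hl, hlast' ▸ hlI, hch'⟩
      have hlen := hmin p' haug'
      rw [hpshape, hp'] at hlen
      simp only [List.length_append, List.length_cons] at hlen
      omega

lemma top_neg (M1 M2 : FinMatroid α) (S : Finset α) (p : List α)
    (hp : IsAugPath M1 M2 S p) (hmin : ∀ q : List α, IsAugPath M1 M2 S q → p.length ≤ q.length)
    (hCC : CC M1 S p) : ∀ z ∈ evens (p.drop 2), ¬ M1.Indep (insert z S) := by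
  intro z hz hcon
  obtain ⟨hne, hnd, hE, hh, hhI, hl, hlI, hch⟩ := hp
  match p, hz, hne, hnd, hE, hl, hlI, hch, hCC, hmin with
  | a :: b :: p₃, hz, hne, hnd, hE, hl, hlI, hch, hCC, hmin => ?_
  simp only [List.drop_succ_cons, List.drop_zero] at hz
  have hzS : z ∉ S := CC_notmem hCC z (by simpa using List.mem_cons_of_mem a hz)
  obtain ⟨m, post, hsplit₃⟩ := List.append_of_mem ((evens_sublist p₃).subset hz)
  have hpshape : a :: b :: p₃ = (a :: b :: m) ++ z :: post := by
    rw [hsplit₃]; simp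
  have hne' : z :: post ≠ [] := by simp
  have hsub : List.Sublist (z :: post) (a :: b :: p₃) := by
    rw [hpshape]
    exact List.sublist_append_right _ _
  have hlast' : (z :: post).getLast hne' = (a :: b :: p₃).getLast hne :=
    (getLast_eq_of_split (by simp) hpshape hne).symm
  have haug' : IsAugPath M1 M2 S (z :: post) :=
    ⟨hne', hsub.nodup hnd, fun u hu => hE u (hsub.subset hu), by simpa using hzS,
      by simpa using hcon, hlast' ▸ hl, hlast' ▸ hlI, chain'_suffix (hpshape ▸ hch)⟩
  have hlen := hmin _ haug'
  rw [hpshape] at hlen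
  simp only [List.length_append, List.length_cons] at hlen
  omega

lemma part1_half (M1 M2 : FinMatroid α) (S : Finset α) (hS1 : M1.Indep S) (p : List α)
    (hp : IsAugPath M1 M2 S p) (hmin : ∀ q : List α, IsAugPath M1 M2 S q → p.length ≤ q.length) :
    M1.Indep (symmDiff S p.toFinset) ∧ (symmDiff S p.toFinset).card = S.card + 1 := by
  obtain ⟨hne, hnd, hE, hh, hhI, hl, hlI, hch⟩ := hp
  have hp' : IsAugPath M1 M2 S p := ⟨hne, hnd, hE, hh, hhI, hl, hlI, hch⟩
  have hCC : CC M1 S p := build_CC M1 M2 S p hp' hmin p [] rfl hne hh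
  exact core M1 p hne S hS1 hnd hCC hhI (top_neg M1 M2 S p hp' hmin hCC)

lemma exchangeEdge_swap {M1 M2 : FinMatroid α} {S : Finset α} {a b : α}
    (h : ExchangeEdge M1 M2 S a b) : ExchangeEdge M2 M1 S b a := by
  rcases h with h | h
  · exact Or.inr ⟨h.2.1, h.1, h.2.2⟩
  · exact Or.inl ⟨h.2.1, h.1, h.2.2⟩

lemma aug_reverse {M1 M2 : FinMatroid α} (hE : M1.E = M2.E) {S : Finset α} {p : List α}
    (hp : IsAugPath M1 M2 S p) : IsAugPath M2 M1 S p.reverse := by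
  obtain ⟨hne, hnd, hEp, hh, hhI, hl, hlI, hch⟩ := hp
  have hne' : p.reverse ≠ [] := by simp [hne]
  refine ⟨hne', by simpa using hnd, fun a ha => hE ▸ hEp a (by simpa using ha), ?_, ?_, ?_, ?_, ?_⟩
  · rwa [List.head_reverse]
  · rwa [List.head_reverse]
  · rwa [List.getLast_reverse]
  · rwa [List.getLast_reverse]
  · show List.IsChain _ _
    rw [List.isChain_reverse]
    exact hch.imp (fun a b h => exchangeEdge_swap h)

/-- Augmenting along a shortest augmenting path gives a common independent set
of size `|S| + 1`; if no augmenting path exists, `S` is maximum. -/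
theorem augmenting_path_theorem (M1 M2 : FinMatroid α) (hE : M1.E = M2.E)
    (S : Finset α) (hS1 : M1.Indep S) (hS2 : M2.Indep S) :
    (∀ p : List α, IsAugPath M1 M2 S p →
        (∀ q : List α, IsAugPath M1 M2 S q → p.length ≤ q.length) →
        M1.Indep (symmDiff S p.toFinset) ∧ M2.Indep (symmDiff S p.toFinset) ∧
          (symmDiff S p.toFinset).card = S.card + 1) ∧
    ((¬ ∃ p : List α, IsAugPath M1 M2 S p) →
        ∀ T : Finset α, M1.Indep T → M2.Indep T → T.card ≤ S.card) := by
  constructor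
  · intro p hp hmin
    have h1 := part1_half M1 M2 S hS1 p hp hmin
    have hmin' : ∀ q : List α, IsAugPath M2 M1 S q → p.reverse.length ≤ q.length := by
      intro q hq
      have := hmin q.reverse (aug_reverse hE.symm hq)
      simpa using this
    have h2 := part1_half M2 M1 S hS2 p.reverse (aug_reverse hE hp) hmin'
    rw [List.toFinset_reverse] at h2
    exact ⟨h1.1, h2.1, h1.2⟩
  · exact part2 M1 M2 S hS1 hS2
end
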